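/- Fix indices i ≠ j, and for g ∈ ℝ let M(g) be the symmetric matrix obtained from the Gram matrix (⟨e_a,e_b⟩)_{0≤a,b≤D} by replacing both entries (i,j) and (j,i) by g. Then the derivative of g ↦ det M(g) at g = ⟨e_i,e_j⟩ equals −2 𝒱_i 𝒱_j cos θ_{ij}. -/

import Mathlib

open scoped RealInnerProductSpace

open Matrix in
lemma my_updateRow_comm {m n R : Type*} [DecidableEq m] (A : Matrix m n R) {i j : m}
    (hij : i ≠ j) (u v : n → R) :
    (A.updateRow i u).updateRow j v = (A.updateRow j v).updateRow i u := by
  ext a c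
  simp only [Matrix.updateRow_apply]
  split_ifs with h1 h2 <;> simp_all

open Matrix in
lemma my_det_minor {n : ℕ} (A : Matrix (Fin (n+1)) (Fin (n+1)) ℝ) (i : Fin (n+1)) :
    (A.updateRow i (Pi.single i 1)).det = (A.submatrix i.succAbove i.succAbove).det := by
  rw [Matrix.det_succ_row _ i, Finset.sum_eq_single i]
  · have h1 : ((-1 : ℝ)) ^ ((i : ℕ) + (i : ℕ)) = 1 := Even.neg_one_pow ⟨(i : ℕ), rfl⟩
    have h2 : (A.updateRow i (Pi.single i 1)).submatrix i.succAbove i.succAbove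
        = A.submatrix i.succAbove i.succAbove := by
      ext a c
      simp [Matrix.submatrix_apply, Matrix.updateRow_ne (Fin.succAbove_ne i a)]
    simp [h1, h2]
  · intro j _ hj
    simp only [Matrix.updateRow_self, mul_eq_zero]
    exact Or.inl (Or.inr (Pi.single_eq_of_ne hj 1))
  · intro h; exact absurd (Finset.mem_univ i) h

theorem stmt_3 (D : ℕ) (hD : 1 ≤ D) (E : Type*) [NormedAddCommGroup E]
    [InnerProductSpace ℝ E] (hdim : Module.finrank ℝ E = D + 1)
    (e : Module.Basis (Fin (D + 1)) ℝ E) (b : Fin (D + 1) → E)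
    (hb : ∀ i j, ⟪b i, e j⟫ = if i = j then 1 else 0)
    (i j : Fin (D + 1)) (hij : i ≠ j) :
    deriv (fun g : ℝ => Matrix.det (Matrix.of fun a c : Fin (D + 1) =>
        if (a = i ∧ c = j) ∨ (a = j ∧ c = i) then g else ⟪e a, e c⟫)) ⟪e i, e j⟫
      = -2 * Real.sqrt (Matrix.det
            (Matrix.of fun a c : {x : Fin (D + 1) // x ≠ i} => ⟪e a.1, e c.1⟫))
          * Real.sqrt (Matrix.det
            (Matrix.of fun a c : {x : Fin (D + 1) // x ≠ j} => ⟪e a.1, e c.1⟫))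
          * Real.cos (Real.arccos (-⟪b i, b j⟫ / (‖b i‖ * ‖b j‖))) := by
  set G : Matrix (Fin (D+1)) (Fin (D+1)) ℝ := Matrix.of fun a c => ⟪e a, e c⟫ with hGdef
  set H : Matrix (Fin (D+1)) (Fin (D+1)) ℝ := Matrix.of fun a c => ⟪b a, b c⟫ with hHdef
  -- vanishing inner products against the basis imply zero
  have hexp : ∀ v : E, (∀ m, ⟪v, e m⟫ = 0) → v = 0 := by
    intro v hv
    have h2 : ⟪v, v⟫ = 0 := by
      nth_rewrite 2 [← e.sum_repr v]
      rw [inner_sum]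
      simp [real_inner_smul_right, hv]
    exact inner_self_eq_zero.mp h2
  -- expansion of e c in the dual basis
  have hec : ∀ c, (∑ k, ⟪e k, e c⟫ • b k) = e c := by
    intro c
    have h := hexp ((∑ k, ⟪e k, e c⟫ • b k) - e c) ?_
    · exact sub_eq_zero.mp h
    intro m
    rw [inner_sub_left, sum_inner]
    simp only [real_inner_smul_left, hb]
    rw [Finset.sum_eq_single m]
    · simp [real_inner_comm]
    · intro k _ hk; simp [hk]
    · intro h; exact absurd (Finset.mem_univ m) h
  have hHG : H * G = 1 := by
    ext a c
    rw [Matrix.mul_apply]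
    have key : ∑ k, H a k * G k c = ⟪b a, e c⟫ := by
      rw [← hec c, inner_sum]
      refine Finset.sum_congr rfl fun k _ => ?_
      rw [real_inner_smul_right]
      simp [hGdef, hHdef, mul_comm]
    rw [key, hb, Matrix.one_apply]
  have hGH : G * H = 1 := mul_eq_one_comm.mp hHG
  -- positive definiteness of G
  have hpd : G.PosDef := by
    refine Matrix.posDef_iff_dotProduct_mulVec.mpr ⟨?_, ?_⟩
    · ext a c
      simp [Matrix.conjTranspose_apply, hGdef, real_inner_comm]
    · intro x hx
      have hv : (∑ k, x k • e k) ≠ 0 := by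
        intro h0
        apply hx
        ext k
        exact Fintype.linearIndependent_iff.mp e.linearIndependent x h0 k
      have hcalc : dotProduct (star x) (G.mulVec x) = ⟪∑ k, x k • e k, ∑ k, x k • e k⟫ := by
        rw [sum_inner]
        simp only [dotProduct, Pi.star_apply, star_trivial, Matrix.mulVec,
          dotProduct, inner_sum, real_inner_smul_left, real_inner_smul_right]
        refine Finset.sum_congr rfl fun a _ => ?_
        rw [Finset.mul_sum]
        refine Finset.sum_congr rfl fun c _ => ?_
        simp [hGdef]; ring
      rw [hcalc]
      rw [real_inner_self_eq_norm_sq]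
      exact pow_pos (norm_pos_iff.mpr hv) 2
  have hdG : 0 < G.det := hpd.det_pos
  -- adjugate of G
  have adjH : G.adjugate = G.det • H := by
    calc G.adjugate = 1 * G.adjugate := (one_mul _).symm
      _ = H * G * G.adjugate := by rw [hHG]
      _ = H * (G * G.adjugate) := by rw [Matrix.mul_assoc]
      _ = H * (G.det • 1) := by rw [Matrix.mul_adjugate]
      _ = G.det • (H * 1) := by rw [Matrix.mul_smul]
      _ = G.det • H := by rw [Matrix.mul_one]
  -- minor determinants
  have hminor : ∀ k : Fin (D+1),
      (Matrix.of fun a c : {x : Fin (D + 1) // x ≠ k} => ⟪e a.1, e c.1⟫).det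
        = G.det * ⟪b k, b k⟫ := by
    intro k
    have h1 : (Matrix.of fun a c : {x : Fin (D + 1) // x ≠ k} => ⟪e a.1, e c.1⟫).det
        = (G.submatrix k.succAbove k.succAbove).det := by
      rw [← Matrix.det_submatrix_equiv_self (finSuccAboveEquiv k)]
      congr 1
    rw [h1, ← my_det_minor, ← Matrix.adjugate_apply, adjH]
    simp [hHdef]
  -- the derivative
  set g0 : ℝ := ⟪e i, e j⟫ with hg0
  set A1 : ℝ := (G.updateRow i (Pi.single j 1)).det with hA1def
  set A2 : ℝ := (G.updateRow j (Pi.single i 1)).det with hA2def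
  set c0 : ℝ := ((G.updateRow j (Pi.single i 1)).updateRow i (Pi.single j 1)).det with hc0def
  have hM : ∀ g : ℝ, (Matrix.of fun a c : Fin (D + 1) =>
        if (a = i ∧ c = j) ∨ (a = j ∧ c = i) then g else ⟪e a, e c⟫)
      = (G.updateRow i (G i + (g - g0) • (Pi.single j 1 : Fin (D+1) → ℝ))).updateRow j
          (G j + (g - g0) • (Pi.single i 1 : Fin (D+1) → ℝ)) := by
    intro g
    ext a c
    rw [Matrix.of_apply]
    by_cases hai : a = i
    · subst hai
      rw [Matrix.updateRow_ne hij, Matrix.updateRow_self]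
      by_cases hcj : c = j
      · subst hcj
        simp [hij, hGdef, hg0]
      · simp [hcj, hij, Pi.single_eq_of_ne hcj, hGdef]
    · by_cases haj : a = j
      · subst haj
        rw [Matrix.updateRow_self]
        by_cases hci : c = i
        · subst hci
          simp [hai, hGdef, hg0, real_inner_comm]
        · simp [hai, hci, Pi.single_eq_of_ne hci, hGdef]
      · rw [Matrix.updateRow_ne haj, Matrix.updateRow_ne hai]
        simp [hai, haj, hGdef]
  have hdet : ∀ g : ℝ, ((G.updateRow i (G i + (g - g0) • (Pi.single j 1 : Fin (D+1) → ℝ))).updateRow j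
        (G j + (g - g0) • (Pi.single i 1 : Fin (D+1) → ℝ))).det
      = G.det + (g - g0) * A1 + (g - g0) * (A2 + (g - g0) * c0) := by
    intro g
    set t := g - g0 with ht
    set B := G.updateRow i (G i + t • (Pi.single j 1 : Fin (D+1) → ℝ)) with hB
    have h1 : (B.updateRow j (G j + t • (Pi.single i 1 : Fin (D+1) → ℝ))).det
        = (B.updateRow j (G j)).det + t * (B.updateRow j (Pi.single i 1)).det := by
      rw [Matrix.det_updateRow_add, Matrix.det_updateRow_smul]
    have h2 : B.updateRow j (G j) = B := by
      have hBj : G j = B j := (Matrix.updateRow_ne hij.symm).symm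
      rw [hBj, Matrix.updateRow_eq_self]
    have h3 : B.det = G.det + t * A1 := by
      rw [hB, Matrix.det_updateRow_add, Matrix.det_updateRow_smul, Matrix.updateRow_eq_self,
        hA1def]
    have h4 : (B.updateRow j (Pi.single i 1)).det = A2 + t * c0 := by
      rw [hB, my_updateRow_comm _ hij, Matrix.det_updateRow_add, Matrix.det_updateRow_smul]
      congr 1
      rw [show G i = (G.updateRow j (Pi.single i 1)) i from (Matrix.updateRow_ne hij).symm,
        Matrix.updateRow_eq_self]
    rw [h1, h2, h3, h4]
  have hfun : (fun g : ℝ => (Matrix.of fun a c : Fin (D + 1) =>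
        if (a = i ∧ c = j) ∨ (a = j ∧ c = i) then g else ⟪e a, e c⟫).det)
      = fun g : ℝ => G.det + (g - g0) * A1 + (g - g0) * (A2 + (g - g0) * c0) :=
    funext fun g => by rw [hM g]; exact hdet g
  have hder : HasDerivAt (fun g : ℝ => G.det + (g - g0) * A1 + (g - g0) * (A2 + (g - g0) * c0))
      (A1 + A2) g0 := by
    have h1 : HasDerivAt (fun g : ℝ => g - g0) 1 g0 := (hasDerivAt_id g0).sub_const g0
    have h2 := h1.mul_const A1
    have h3 : HasDerivAt (fun g : ℝ => A2 + (g - g0) * c0) c0 g0 := by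
      exact ((hasDerivAt_const g0 A2).add (h1.mul_const c0)).congr_deriv (by ring)
    have h5 := ((hasDerivAt_const g0 G.det).add h2).add (h1.mul h3)
    refine h5.congr_deriv ?_
    simp
  rw [hfun, hder.deriv]
  -- identify the cofactors
  have hA1 : A1 = G.det * ⟪b j, b i⟫ := by
    rw [hA1def, show (G.updateRow i (Pi.single j 1)).det = G.adjugate j i from
      (Matrix.adjugate_apply G j i).symm, adjH]
    simp [hHdef]
  have hA2 : A2 = G.det * ⟪b i, b j⟫ := by
    rw [hA2def, show (G.updateRow j (Pi.single i 1)).det = G.adjugate i j from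
      (Matrix.adjugate_apply G i j).symm, adjH]
    simp [hHdef]
  -- the right-hand side
  have hbne : ∀ k, b k ≠ 0 := by
    intro k hk
    have h := hb k k
    rw [hk] at h
    simp at h
  have hpi : (0:ℝ) < ‖b i‖ := norm_pos_iff.mpr (hbne i)
  have hpj : (0:ℝ) < ‖b j‖ := norm_pos_iff.mpr (hbne j)
  have hcs : |(-⟪b i, b j⟫) / (‖b i‖ * ‖b j‖)| ≤ 1 := by
    have hprod : (0:ℝ) < ‖b i‖ * ‖b j‖ := mul_pos hpi hpj
    rw [abs_div, abs_neg, abs_of_pos hprod]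
    exact (div_le_one hprod).mpr (abs_real_inner_le_norm (b i) (b j))
  obtain ⟨hcs1, hcs2⟩ := abs_le.mp hcs
  rw [hminor i, hminor j, Real.cos_arccos hcs1 hcs2, hA1, hA2,
    real_inner_self_eq_norm_sq (b i), real_inner_self_eq_norm_sq (b j),
    Real.sqrt_mul hdG.le, Real.sqrt_mul hdG.le,
    Real.sqrt_sq (norm_nonneg _), Real.sqrt_sq (norm_nonneg _),
    real_inner_comm (b j) (b i)]
  field_simp
  ring_nf
  rw [Real.sq_sqrt hdG.le]
  ring
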